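/- Let Y ∈ ℝ^{n×B} be a matrix of one-hot label rows for n nodes over B balanced classes (each class has exactly n/B nodes), let Ā ∈ ℝ^{n×n} be a row-stochastic matrix supported on neighborhoods N(v), and let B̂ ∈ ℝ^{n×B} be defined by B̂_{u,i} = (B/n)·1[y(u)=i]. Then (1/n)‖Y − ĀB̂‖_F² ≤ (1/n) ∑_{v} [1 + (B²/n)·(1 − ε(v))], where ε(v) = (1/|N(v)|)∑_{u ∈ N(v)} 1[y(v)=y(u)] is the one-hop homophily score. -/

import Mathlib

/-- For one-hot label matrix `Y`, row-stochastic matrix `Ā`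
supported on neighborhoods, and the balanced class-average indicator matrix
`B̂`, the averaged squared Frobenius error `(1/n)‖Y − ĀB̂‖_F²` is bounded by
`(1/n)·∑_v [1 + (B²/n)(1 − ε(v))]`, where `ε(v)` is the one-hop homophily
score. -/
theorem label_smoothing_bound
    {n B : ℕ} (hn : 0 < n) (hB : 0 < B) (hdvd : B ∣ n)
    (y : Fin n → Fin B)
    (hbal : ∀ i : Fin B, (Finset.univ.filter (fun v => y v = i)).card = n / B)
    (N : Fin n → Finset (Fin n)) (hNne : ∀ v, (N v).Nonempty)
    (Abar : Matrix (Fin n) (Fin n) ℝ)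
    (hA0 : ∀ v u, 0 ≤ Abar v u)
    (hsupp : ∀ v u, u ∉ N v → Abar v u = 0)
    (hrow : ∀ v, ∑ u ∈ N v, Abar v u = 1)
    (Y Bhat : Matrix (Fin n) (Fin B) ℝ)
    (hY : ∀ v i, Y v i = if y v = i then (1 : ℝ) else 0)
    (hBhat : ∀ u i, Bhat u i = (B : ℝ) / (n : ℝ) * (if y u = i then 1 else 0))
    (ε : Fin n → ℝ)
    (hε : ∀ v, ε v =
      (((N v).filter (fun u => y v = y u)).card : ℝ) / ((N v).card : ℝ)) :
    (1 / (n : ℝ)) * ∑ v, ∑ i, (Y v i - (Abar * Bhat) v i) ^ 2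
      ≤ (1 / (n : ℝ)) *
          ∑ v : Fin n, (1 + (B : ℝ) ^ 2 / (n : ℝ) * (1 - ε v)) := by
  have hnR : (0:ℝ) < (n:ℝ) := by exact_mod_cast hn
  have hBn : B ≤ n := Nat.le_of_dvd hn hdvd
  set c : ℝ := (B:ℝ) / (n:ℝ) with hcdef
  have hc0 : (0:ℝ) ≤ c := by positivity
  have hc1 : c ≤ 1 := by
    rw [hcdef, div_le_one hnR]; exact_mod_cast hBn
  -- entry formula for the product
  have hAB : ∀ v i, (Abar * Bhat) v i
      = c * ∑ u ∈ (N v).filter (fun u => y u = i), Abar v u := by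
    intro v i
    rw [Matrix.mul_apply]
    rw [← Finset.sum_subset (Finset.subset_univ (N v))
      (fun u _ hu => by rw [hsupp v u hu, zero_mul])]
    rw [Finset.sum_filter, Finset.mul_sum]
    apply Finset.sum_congr rfl
    intro u _
    rw [hBhat]
    by_cases h : y u = i <;> simp [h] <;> ring
  -- per-row bound
  have key : ∀ v, ∑ i, (Y v i - (Abar * Bhat) v i) ^ 2
      ≤ 1 + (B:ℝ) ^ 2 / (n:ℝ) * (1 - ε v) := by
    intro v
    set T : Fin B → ℝ := fun i => ∑ u ∈ (N v).filter (fun u => y u = i), Abar v u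
      with hTdef
    have hTnn : ∀ i, 0 ≤ T i := fun i =>
      Finset.sum_nonneg fun u _ => hA0 v u
    have hTsum : ∑ i, T i = 1 := by
      rw [hTdef]
      rw [Finset.sum_fiberwise_of_maps_to (fun u _ => Finset.mem_univ (y u))]
      exact hrow v
    have hTle : ∀ i, T i ≤ 1 := by
      intro i
      rw [← hrow v]
      exact Finset.sum_le_sum_of_subset_of_nonneg (Finset.filter_subset _ _)
        (fun u _ _ => hA0 v u)
    have hNpos : 0 < (N v).card := Finset.card_pos.mpr (hNne v)
    have hNposR : (0:ℝ) < ((N v).card : ℝ) := by exact_mod_cast hNpos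
    have hNlen : (N v).card ≤ n := by
      simpa using Finset.card_le_univ (N v)
    have hsumform : ∑ i, (Y v i - (Abar * Bhat) v i) ^ 2
        = ∑ i, ((if y v = i then (1:ℝ) else 0) - c * T i) ^ 2 := by
      apply Finset.sum_congr rfl
      intro i _
      rw [hY, hAB]
    rw [hsumform]
    by_cases hhom : ∀ u ∈ N v, y v = y u
    · -- all neighbors homophilic
      have hfil : (N v).filter (fun u => y v = y u) = N v :=
        Finset.filter_true_of_mem hhom
      have hev : ε v = 1 := by
        rw [hε, hfil, div_self (ne_of_gt hNposR)]
      have hT0 : ∀ i, i ≠ y v → T i = 0 := by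
        intro i hi
        have hempty : (N v).filter (fun u => y u = i) = ∅ :=
          Finset.filter_false_of_mem
            (fun u hu h => hi (((hhom u hu).trans h).symm))
        simp [hTdef, hempty]
      have hTyv : T (y v) = 1 := by
        have hfil2 : (N v).filter (fun u => y u = y v) = N v :=
          Finset.filter_true_of_mem (fun u hu => (hhom u hu).symm)
        rw [hTdef]
        simp only [hfil2]
        exact hrow v
      rw [Finset.sum_eq_single (y v)]
      · rw [if_pos rfl, hTyv, hev]
        nlinarith
      · intro i _ hi
        rw [hT0 i hi, if_neg (Ne.symm hi)]
        ring
      · intro h; exact absurd (Finset.mem_univ _) h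
    · -- at least one heterophilic neighbor
      push_neg at hhom
      obtain ⟨u₀, hu₀, hne₀⟩ := hhom
      have hcardlt : ((N v).filter (fun u => y v = y u)).card < (N v).card := by
        apply Finset.card_lt_card
        rw [Finset.ssubset_iff_of_subset (Finset.filter_subset _ _)]
        exact ⟨u₀, hu₀, by simp [hne₀]⟩
      have hcardR : (((N v).filter (fun u => y v = y u)).card : ℝ) + 1
          ≤ ((N v).card : ℝ) := by
        exact_mod_cast Nat.succ_le_of_lt hcardlt
      have hεbound : 1 / ((N v).card : ℝ) ≤ 1 - ε v := by
        rw [hε, le_sub_iff_add_le, ← add_div, div_le_one hNposR]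
        linarith
      have hεn : 1 / (n:ℝ) ≤ 1 - ε v := by
        refine le_trans ?_ hεbound
        apply one_div_le_one_div_of_le hNposR
        exact_mod_cast hNlen
      have hbound : ∑ i, ((if y v = i then (1:ℝ) else 0) - c * T i) ^ 2
          ≤ 1 + c ^ 2 := by
        rw [← Finset.add_sum_erase _ _ (Finset.mem_univ (y v))]
        have h1 : ((if y v = y v then (1:ℝ) else 0) - c * T (y v)) ^ 2 ≤ 1 := by
          rw [if_pos rfl]
          have h1a := hTnn (y v)
          have h1b := hTle (y v)
          have hx1 : c * T (y v) ≤ 1 := mul_le_one₀ hc1 h1a h1b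
          have hx0 : 0 ≤ c * T (y v) := mul_nonneg hc0 h1a
          nlinarith [mul_nonneg hx0 (sub_nonneg.mpr hx1)]
        have h2 : ∑ i ∈ Finset.univ.erase (y v),
            ((if y v = i then (1:ℝ) else 0) - c * T i) ^ 2 ≤ c ^ 2 := by
          calc ∑ i ∈ Finset.univ.erase (y v),
              ((if y v = i then (1:ℝ) else 0) - c * T i) ^ 2
              ≤ ∑ i ∈ Finset.univ.erase (y v), c ^ 2 * T i := by
                apply Finset.sum_le_sum
                intro i hi
                rw [if_neg (Ne.symm (Finset.ne_of_mem_erase hi))]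
                have h2a := hTnn i
                have h2b := hTle i
                nlinarith [mul_nonneg (mul_nonneg (sq_nonneg c) h2a)
                  (sub_nonneg.mpr h2b)]
            _ = c ^ 2 * ∑ i ∈ Finset.univ.erase (y v), T i := by
                rw [Finset.mul_sum]
            _ ≤ c ^ 2 * ∑ i, T i := by
                apply mul_le_mul_of_nonneg_left _ (sq_nonneg c)
                exact Finset.sum_le_sum_of_subset_of_nonneg
                  (Finset.erase_subset _ _) (fun i _ _ => hTnn i)
            _ = c ^ 2 := by rw [hTsum, mul_one]
        linarith
      refine hbound.trans ?_
      have hcsq : c ^ 2 = (B:ℝ) ^ 2 / (n:ℝ) * (1 / (n:ℝ)) := by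
        rw [hcdef]; ring
      have hBn0 : (0:ℝ) ≤ (B:ℝ) ^ 2 / (n:ℝ) := by positivity
      rw [hcsq]
      nlinarith
  calc (1 / (n : ℝ)) * ∑ v, ∑ i, (Y v i - (Abar * Bhat) v i) ^ 2
      ≤ (1 / (n : ℝ)) * ∑ v : Fin n, (1 + (B:ℝ) ^ 2 / (n:ℝ) * (1 - ε v)) := by
        apply mul_le_mul_of_nonneg_left _ (by positivity)
        exact Finset.sum_le_sum fun v _ => key v
    _ = _ := rfl
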